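/- Let A ∈ ℝ^{m×n} have rank r and M̃ = [A, A+E₂, …, A+E_k]. Then for indices i = r+1,…,min(m,kn), σ_i(M̃) ≤ √(Σ_{j=2}^k (2‖A‖₂‖E_j‖₂ + ‖E_j‖₂²)). -/

import Mathlib

open Matrix Finset
open scoped RealInnerProductSpace

/-- Spectral (ℓ²-operator) norm of a matrix. -/
noncomputable def specNorm {m n : Type*} [Fintype m] [Fintype n] [DecidableEq n]
    (A : Matrix m n ℝ) : ℝ :=
  ‖LinearMap.toContinuousLinearMap (Matrix.toEuclideanLin A)‖

/-- Eigenvalues of a real symmetric matrix, in nonincreasing order (0-based);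
returns 0 if the matrix is not Hermitian. -/
noncomputable def eigDesc {n : ℕ} (A : Matrix (Fin n) (Fin n) ℝ) : Fin n → ℝ :=
  if hA : A.IsHermitian then
    fun i => hA.eigenvalues (Tuple.sort hA.eigenvalues i.rev)
  else fun _ => 0

/-- The `i`-th largest singular value (0-based), defined as the square root of the
`i`-th largest eigenvalue of `Aᵀ * A`; zero for out-of-range indices. -/
noncomputable def sval {m n : ℕ} (A : Matrix (Fin m) (Fin n) ℝ) (i : ℕ) : ℝ :=
  if h : i < n then Real.sqrt (eigDesc (Aᵀ * A) ⟨i, h⟩) else 0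

/-- Horizontal concatenation of `k` matrices of size `m × n`. -/
noncomputable def hconcat {m n k : ℕ} (A : Fin k → Matrix (Fin m) (Fin n) ℝ) :
    Matrix (Fin m) (Fin (k * n)) ℝ :=
  Matrix.of fun i j => A (finProdFinEquiv.symm j).1 i (finProdFinEquiv.symm j).2

lemma euclid_norm_sq {N : ℕ} (x : EuclideanSpace ℝ (Fin N)) : ‖x‖ ^ 2 = ∑ j, x j ^ 2 := by
  rw [EuclideanSpace.norm_eq, Real.sq_sqrt (by positivity)]
  simp [sq_abs]

lemma inner_eq_sum_repr {N : ℕ} (b : OrthonormalBasis (Fin N) ℝ (EuclideanSpace ℝ (Fin N)))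
    (x y : EuclideanSpace ℝ (Fin N)) : ⟪x, y⟫ = ∑ j, b.repr x j * b.repr y j := by
  rw [← b.repr.inner_map_map x y]
  simp only [PiLp.inner_apply, RCLike.inner_apply, starRingEnd_apply, star_trivial]
  exact Finset.sum_congr rfl fun _ _ => mul_comm _ _

lemma inner_eq_dot {N : ℕ} (x y : EuclideanSpace ℝ (Fin N)) : ⟪x, y⟫ = ⇑x ⬝ᵥ ⇑y := by
  simp [PiLp.inner_apply, dotProduct, mul_comm]

lemma dot_symm {N : ℕ} (S : Matrix (Fin N) (Fin N) ℝ) (hST : Sᵀ = S) (u v : Fin N → ℝ) :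
    u ⬝ᵥ (S *ᵥ v) = (S *ᵥ u) ⬝ᵥ v := by
  rw [Matrix.dotProduct_mulVec, ← Matrix.vecMul_transpose, hST]

lemma key {N : ℕ} (S : Matrix (Fin N) (Fin N) ℝ) (hS : S.IsHermitian)
    (i : Fin N) (W : Submodule ℝ (EuclideanSpace ℝ (Fin N))) (c : ℝ)
    (hW : N ≤ i + Module.finrank ℝ W)
    (hq : ∀ x : EuclideanSpace ℝ (Fin N), x ∈ W →
      ⟪x, (Matrix.toEuclideanLin S) x⟫ ≤ c * ‖x‖ ^ 2) :
    eigDesc S i ≤ c := by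
  classical
  rw [eigDesc, dif_pos hS]
  set b := hS.eigenvectorBasis with hb
  set μ := hS.eigenvalues with hμ
  set σ := Tuple.sort μ with hσ
  show μ (σ i.rev) ≤ c
  set s : Finset (Fin N) := (Finset.Ici i.rev).image σ with hs
  have hscard : s.card = i + 1 := by
    rw [hs, Finset.card_image_of_injective _ σ.injective, Fin.card_Ici, Fin.val_rev]
    omega
  set T := Submodule.span ℝ (b '' (↑s : Set (Fin N))) with hT
  have hTrank : Module.finrank ℝ T = s.card := by
    rw [hT, Set.image_eq_range]
    have h := finrank_span_eq_card (R := ℝ)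
      ((b.orthonormal.linearIndependent).comp ((↑) : (↑s : Set (Fin N)) → Fin N)
        Subtype.val_injective)
    simpa [Function.comp_def] using h
  have hfin : Module.finrank ℝ (EuclideanSpace ℝ (Fin N)) = N := finrank_euclideanSpace_fin
  have hinf : 0 < Module.finrank ℝ ↥(T ⊓ W) := by
    have h1 := Submodule.finrank_sup_add_finrank_inf_eq T W
    have h2 : Module.finrank ℝ ↥(T ⊔ W) ≤ N := le_trans (Submodule.finrank_le _) (le_of_eq hfin)
    have h3 : (i : ℕ) + 1 ≤ N := i.isLt
    omega
  obtain ⟨x, hxTW, hx0⟩ : ∃ x ∈ T ⊓ W, x ≠ 0 := by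
    haveI := Module.finrank_pos_iff.mp hinf
    obtain ⟨y, hy⟩ := exists_ne (0 : ↥(T ⊓ W))
    exact ⟨y, y.2, fun h => hy (Subtype.ext h)⟩
  have hsupp : ∀ l, l ∉ s → b.repr x l = 0 := by
    intro l hl
    rw [b.repr_apply_apply]
    have hker : T ≤ LinearMap.ker (innerₛₗ ℝ (b l)) := by
      rw [hT, Submodule.span_le]
      rintro _ ⟨j, hj, rfl⟩
      simp only [SetLike.mem_coe, LinearMap.mem_ker, innerₛₗ_apply_apply]
      exact b.orthonormal.2 (fun h => hl (h ▸ hj))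
    simpa using hker hxTW.1
  have hSb : ∀ l, (Matrix.toEuclideanLin S) (b l) = μ l • b l := by
    intro l
    ext a
    exact congrFun (hS.mulVec_eigenvectorBasis l) a
  have hST : Sᵀ = S := by
    ext a b'
    have := congrFun (congrFun hS.eq a) b'
    simpa [Matrix.conjTranspose_apply] using this
  have hrepr : ∀ l, b.repr ((Matrix.toEuclideanLin S) x) l = μ l * b.repr x l := by
    intro l
    rw [b.repr_apply_apply, b.repr_apply_apply]
    have hsym : ⟪b l, (Matrix.toEuclideanLin S) x⟫ = ⟪(Matrix.toEuclideanLin S) (b l), x⟫ := by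
      rw [inner_eq_dot, inner_eq_dot]
      exact dot_symm S hST _ _
    rw [hsym, hSb l, inner_smul_left]
    simp
  have hx2 : ‖x‖ ^ 2 = ∑ l, (b.repr x l) ^ 2 := by
    rw [← b.repr.norm_map x, euclid_norm_sq]
  have hlow : μ (σ i.rev) * ‖x‖ ^ 2 ≤ ⟪x, (Matrix.toEuclideanLin S) x⟫ := by
    rw [inner_eq_sum_repr b]
    calc μ (σ i.rev) * ‖x‖ ^ 2 = ∑ l, μ (σ i.rev) * (b.repr x l) ^ 2 := by
          rw [hx2, Finset.mul_sum]
      _ ≤ ∑ l, μ l * (b.repr x l) ^ 2 := by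
          refine Finset.sum_le_sum fun l _ => ?_
          by_cases hbl : b.repr x l = 0
          · simp [hbl]
          · have hls : l ∈ s := by
              by_contra hc
              exact hbl (hsupp l hc)
            obtain ⟨j, hj, rfl⟩ := Finset.mem_image.mp hls
            have : μ (σ i.rev) ≤ μ (σ j) := Tuple.monotone_sort μ (Finset.mem_Ici.mp hj)
            exact mul_le_mul_of_nonneg_right this (sq_nonneg _)
      _ = ∑ l, b.repr x l * b.repr ((Matrix.toEuclideanLin S) x) l := by
          refine Finset.sum_congr rfl fun l _ => ?_
          rw [hrepr l]; ring
  have hup := hq x hxTW.2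
  have hxpos : 0 < ‖x‖ ^ 2 := pow_pos (norm_pos_iff.mpr hx0) 2
  exact le_of_mul_le_mul_right (hlow.trans hup) hxpos

lemma specNorm_nonneg {m n : Type*} [Fintype m] [Fintype n] [DecidableEq n]
    (A : Matrix m n ℝ) : 0 ≤ specNorm A := norm_nonneg _

theorem stmt11 {m n k : ℕ} (hk : 2 ≤ k) (A : Matrix (Fin m) (Fin n) ℝ)
    (E : Fin k → Matrix (Fin m) (Fin n) ℝ) (hE0 : E ⟨0, by omega⟩ = 0)
    (i : ℕ) (hi : A.rank ≤ i) (hi2 : i < min m (k * n)) :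
    sval (hconcat fun j => A + E j) i
      ≤ Real.sqrt (∑ j ∈ Finset.univ.erase (⟨0, by omega⟩ : Fin k),
          (2 * specNorm A * specNorm (E j) + specNorm (E j) ^ 2)) := by
  classical
  have hkn : i < k * n := lt_of_lt_of_le hi2 (min_le_right _ _)
  set z : Fin k := ⟨0, by omega⟩ with hz
  set Mt := hconcat (fun j => A + E j) with hMt
  rw [sval, dif_pos hkn]
  apply Real.sqrt_le_sqrt
  set Mfull := hconcat (fun _ : Fin k => A) with hMfull
  set P : Matrix (Fin n) (Fin (k * n)) ℝ :=
    Matrix.of fun a j => if (finProdFinEquiv.symm j).2 = a then 1 else 0 with hP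
  have hfact : A * P = Mfull := by
    ext r j
    simp [Matrix.mul_apply, hP, hMfull, hconcat, mul_ite, mul_one, mul_zero,
      Finset.sum_ite_eq]
  have hcomp : ∀ (B : Matrix (Fin m) (Fin (k*n)) ℝ), Matrix.toEuclideanLin B =
      ((WithLp.linearEquiv 2 ℝ (Fin m → ℝ)).symm.toLinearMap.comp
        ((Matrix.mulVecLin B).comp (WithLp.linearEquiv 2 ℝ (Fin (k*n) → ℝ)).toLinearMap)) :=
    fun _ => rfl
  have hr1 : Module.finrank ℝ ↥(LinearMap.range (Matrix.toEuclideanLin Mfull)) = Mfull.rank := by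
    rw [hcomp Mfull, LinearMap.range_comp, LinearMap.range_comp, LinearEquiv.range,
      Submodule.map_top]
    exact LinearEquiv.finrank_map_eq _ _
  have hr2 : Mfull.rank ≤ A.rank := by
    rw [← hfact]; exact rank_mul_le_left A P
  have hrn := LinearMap.finrank_range_add_finrank_ker (Matrix.toEuclideanLin Mfull)
  have hfin : Module.finrank ℝ (EuclideanSpace ℝ (Fin (k * n))) = k * n :=
    finrank_euclideanSpace_fin
  have hWrank : k * n ≤ i +
      Module.finrank ℝ ↥(LinearMap.ker (Matrix.toEuclideanLin Mfull)) := by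
    rw [hfin] at hrn
    omega
  have hH : (Mtᵀ * Mt).IsHermitian := by
    have h := isHermitian_conjTranspose_mul_self Mt
    rwa [Matrix.conjTranspose_eq_transpose_of_trivial] at h
  refine key _ hH ⟨i, hkn⟩ (LinearMap.ker (Matrix.toEuclideanLin Mfull)) _ hWrank ?_
  intro x hx
  -- blocks of x
  set xb : Fin k → EuclideanSpace ℝ (Fin n) :=
    fun j => (WithLp.equiv 2 (Fin n → ℝ)).symm (fun a => x (finProdFinEquiv (j, a))) with hxbdef
  have hxb : ∀ j a, (xb j) a = x (finProdFinEquiv (j, a)) := fun j a => rfl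
  have hMx : Mfull *ᵥ ⇑x = 0 := by
    have h0 : Matrix.toEuclideanLin Mfull x = 0 := hx
    funext r
    exact congrFun (congrArg (fun (v : EuclideanSpace ℝ (Fin m)) => ⇑v) h0) r
  have hadd : Mt = Mfull + hconcat E := rfl
  have hMtx : Mt *ᵥ ⇑x = (hconcat E) *ᵥ ⇑x := by
    rw [hadd, Matrix.add_mulVec, hMx, zero_add]
  have h1 : ⟪x, Matrix.toEuclideanLin (Mtᵀ * Mt) x⟫ = (Mt *ᵥ ⇑x) ⬝ᵥ (Mt *ᵥ ⇑x) := by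
    rw [inner_eq_dot]
    show ⇑x ⬝ᵥ ((Mtᵀ * Mt) *ᵥ ⇑x) = _
    rw [← Matrix.mulVec_mulVec, Matrix.dotProduct_mulVec, Matrix.vecMul_transpose]
  have hEsplit : ∀ r, ((hconcat E) *ᵥ ⇑x) r = ∑ j : Fin k, ((E j) *ᵥ ⇑(xb j)) r := by
    intro r
    show ∑ j', hconcat E r j' * x j' = _
    rw [← finProdFinEquiv.sum_comp (fun j' => hconcat E r j' * x j')]
    rw [Fintype.sum_prod_type]
    refine Finset.sum_congr rfl fun j _ => ?_
    show ∑ a, hconcat E r (finProdFinEquiv (j, a)) * x (finProdFinEquiv (j, a))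
        = ∑ a, E j r a * (xb j) a
    refine Finset.sum_congr rfl fun a _ => ?_
    rw [hxb]
    simp only [hconcat, Matrix.of_apply, Equiv.symm_apply_apply]
  set Y : EuclideanSpace ℝ (Fin m) := ∑ j, Matrix.toEuclideanLin (E j) (xb j) with hY
  have hYc : ∀ r, Y r = ((hconcat E) *ᵥ ⇑x) r := by
    intro r
    rw [hEsplit r]
    show (∑ j, Matrix.toEuclideanLin (E j) (xb j)) r = _
    rw [WithLp.ofLp_sum, Finset.sum_apply]
    rfl
  have hy : (Mt *ᵥ ⇑x) ⬝ᵥ (Mt *ᵥ ⇑x) = ‖Y‖ ^ 2 := by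
    rw [hMtx, euclid_norm_sq Y]
    simp only [dotProduct]
    exact Finset.sum_congr rfl fun r _ => by rw [← hYc r]; ring
  have hz0 : Matrix.toEuclideanLin (E z) (xb z) = 0 := by
    have : E z = 0 := hE0
    rw [this]
    simp
  have hb1 : ‖Y‖ ≤ ∑ j ∈ univ.erase z, specNorm (E j) * ‖xb j‖ := by
    have hsum : Y = ∑ j ∈ univ.erase z, Matrix.toEuclideanLin (E j) (xb j) := by
      rw [hY]
      exact (Finset.sum_erase _ (by rw [hz0])).symm
    rw [hsum]
    refine (norm_sum_le _ _).trans (Finset.sum_le_sum fun j _ => ?_)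
    have h := (LinearMap.toContinuousLinearMap (Matrix.toEuclideanLin (E j))).le_opNorm (xb j)
    simpa [specNorm, LinearMap.coe_toContinuousLinearMap'] using h
  have hnorm : ∑ j : Fin k, ‖xb j‖ ^ 2 = ‖x‖ ^ 2 := by
    rw [euclid_norm_sq x]
    rw [← finProdFinEquiv.sum_comp (fun j' => x j' ^ 2)]
    rw [Fintype.sum_prod_type]
    refine Finset.sum_congr rfl fun j _ => ?_
    rw [euclid_norm_sq (xb j)]
    exact Finset.sum_congr rfl fun a _ => by rw [hxb]
  have hxle : ∑ j ∈ univ.erase z, ‖xb j‖ ^ 2 ≤ ‖x‖ ^ 2 := by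
    rw [← hnorm]
    exact Finset.sum_le_sum_of_subset_of_nonneg (Finset.subset_univ _)
      (fun j _ _ => sq_nonneg _)
  have hcs : (∑ j ∈ univ.erase z, specNorm (E j) * ‖xb j‖) ^ 2
      ≤ (∑ j ∈ univ.erase z, specNorm (E j) ^ 2) * ∑ j ∈ univ.erase z, ‖xb j‖ ^ 2 :=
    Finset.sum_mul_sq_le_sq_mul_sq _ _ _
  have hspos : 0 ≤ ∑ j ∈ univ.erase z, specNorm (E j) ^ 2 :=
    Finset.sum_nonneg fun j _ => sq_nonneg _
  calc ⟪x, Matrix.toEuclideanLin (Mtᵀ * Mt) x⟫ = ‖Y‖ ^ 2 := by rw [h1, hy]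
    _ ≤ (∑ j ∈ univ.erase z, specNorm (E j) * ‖xb j‖) ^ 2 :=
        pow_le_pow_left₀ (norm_nonneg _) hb1 2
    _ ≤ (∑ j ∈ univ.erase z, specNorm (E j) ^ 2) * ∑ j ∈ univ.erase z, ‖xb j‖ ^ 2 := hcs
    _ ≤ (∑ j ∈ univ.erase z, specNorm (E j) ^ 2) * ‖x‖ ^ 2 :=
        mul_le_mul_of_nonneg_left hxle hspos
    _ ≤ (∑ j ∈ univ.erase z, (2 * specNorm A * specNorm (E j) + specNorm (E j) ^ 2)) * ‖x‖ ^ 2 := by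
        refine mul_le_mul_of_nonneg_right (Finset.sum_le_sum fun j _ => ?_) (sq_nonneg _)
        have : 0 ≤ 2 * specNorm A * specNorm (E j) := by
          have h1 := specNorm_nonneg A
          have h2 := specNorm_nonneg (E j)
          positivity
        linarith
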